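/- Let 𝓘 = (I_1, I_2) be two coloring channels over Σ = [q] with K = I_1 ∩ I_2, I_1* = I_1 \ I_2, I_2* = I_2 \ I_1, L = Σ \ (I_1 ∪ I_2), and |K| = k, |I_1*| = p_1, |I_2*| = p_2 with k, p_1, p_2 ≥ 1. Let i_1, i_2, j_1, j_2 ≥ 0 be integers with j_1 + j_2 + i_1 + i_2 = n, and assume j_2 = 0 or L ≠ ∅. Let A^{i_1,i_2,j_1,j_2} be the set of x ∈ Σ^n containing exactly i_ℓ entries from I_ℓ* for ℓ = 1,2, exactly j_1 entries from K, and exactly j_2 entries from L, and let A_𝓘^{i_1,i_2,j_1,j_2} = { x_𝓘 : x ∈ A^{i_1,i_2,j_1,j_2} }. Then |A_𝓘^{i_1,i_2,j_1,j_2}| = k^{j_1} p_1^{i_1} p_2^{i_2} C(j_1+i_1, i_1) C(j_1+i_2, i_2). -/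

import Mathlib

/-- The output of a single coloring channel `I`: the subsequence of `x`
consisting (in order) of the letters of `x` that belong to `I`. -/
def channelOutput {q : ℕ} (I : Finset (Fin q)) (x : List (Fin q)) : List (Fin q) :=
  x.filter (fun a => a ∈ I)

/-- The set `A_𝓘(n)` of all tuples of channel outputs over inputs of length `n`. -/
def channelOutputs {q : ℕ} {ι : Type} (𝓘 : ι → Finset (Fin q)) (n : ℕ) :
    Set (ι → List (Fin q)) :=
  { y | ∃ x : List (Fin q), x.length = n ∧ y = fun i => channelOutput (𝓘 i) x }

/-- The capacity of a sequence of coloring channels: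
`limsup_{n→∞} (1/n) log_q |A_𝓘(n)|`. -/
noncomputable def capacity {q : ℕ} {ι : Type} (𝓘 : ι → Finset (Fin q)) : ℝ :=
  Filter.atTop.limsup fun n : ℕ =>
    Real.logb q ((channelOutputs 𝓘 n).ncard : ℝ) / (n : ℝ)

/-- The binary entropy function (with `H(0) = H(1) = 0`). -/
noncomputable def binH (x : ℝ) : ℝ :=
  -(x * Real.logb 2 x) - (1 - x) * Real.logb 2 (1 - x)

section Aux

variable {q : ℕ}

def mg (I1 I2 : Finset (Fin q)) : List (Fin q) → List (Fin q) → List (Fin q)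
  | [], v => v
  | a :: u, [] => a :: u
  | a :: u, b :: v =>
    if a ∈ I2 then
      if b ∈ I1 then a :: mg I1 I2 u v
      else b :: mg I1 I2 (a :: u) v
    else a :: mg I1 I2 u (b :: v)
termination_by u v => u.length + v.length

lemma mg_mem {I1 I2 : Finset (Fin q)} {u v : List (Fin q)} {c : Fin q}
    (h : c ∈ mg I1 I2 u v) : c ∈ u ∨ c ∈ v := by
  induction u, v using mg.induct I1 I2 with
  | case1 v => rw [mg] at h; exact Or.inr h
  | case2 a u => rw [mg] at h; exact Or.inl h
  | case3 a u b v ha hb ih =>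
    rw [mg, if_pos ha, if_pos hb] at h
    rcases List.mem_cons.1 h with h | h
    · exact Or.inl (h ▸ List.mem_cons_self)
    · rcases ih h with h | h
      · exact Or.inl (List.mem_cons_of_mem _ h)
      · exact Or.inr (List.mem_cons_of_mem _ h)
  | case4 a u b v ha hb ih =>
    rw [mg, if_pos ha, if_neg hb] at h
    rcases List.mem_cons.1 h with h | h
    · exact Or.inr (h ▸ List.mem_cons_self)
    · rcases ih h with h | h
      · exact Or.inl h
      · exact Or.inr (List.mem_cons_of_mem _ h)
  | case5 a u b v ha ih =>
    rw [mg, if_neg ha] at h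
    rcases List.mem_cons.1 h with h | h
    · exact Or.inl (h ▸ List.mem_cons_self)
    · rcases ih h with h | h
      · exact Or.inl (List.mem_cons_of_mem _ h)
      · exact Or.inr h

lemma mg_filter_left {I1 I2 : Finset (Fin q)} : ∀ {u v : List (Fin q)},
    (∀ a ∈ u, a ∈ I1) → (∀ b ∈ v, b ∈ I2) →
    (u.filter (fun a => a ∈ I2) = v.filter (fun a => a ∈ I1)) →
    (mg I1 I2 u v).filter (fun a => a ∈ I1) = u := by
  intro u v
  induction u, v using mg.induct I1 I2 with
  | case1 v =>
    intro _ _ hf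
    rw [mg]
    simp only [List.filter_nil] at hf
    exact hf.symm
  | case2 a u =>
    intro hu _ _
    rw [mg]
    exact List.filter_eq_self.2 (fun b hb => by simpa using hu b hb)
  | case3 a u b v ha hb ih =>
    intro hu hv hf
    rw [mg, if_pos ha, if_pos hb]
    simp only [List.filter_cons, ha, hb, decide_eq_true_eq, if_true, if_pos] at hf ⊢
    rw [if_pos (hu a (List.mem_cons_self))]
    injection hf with h1 h2
    exact congrArg (a :: ·) (ih (fun x hx => hu x (List.mem_cons_of_mem _ hx))
      (fun x hx => hv x (List.mem_cons_of_mem _ hx)) h2)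
  | case4 a u b v ha hb ih =>
    intro hu hv hf
    rw [mg, if_pos ha, if_neg hb]
    have hfb : List.filter (fun a => decide (a ∈ I1)) (b :: v) =
        List.filter (fun a => decide (a ∈ I1)) v := by
      simp [List.filter_cons, hb]
    rw [hfb] at hf
    rw [List.filter_cons]
    simp only [hb, decide_eq_true_eq, if_neg]
    exact ih hu (fun x hx => hv x (List.mem_cons_of_mem _ hx)) hf
  | case5 a u b v ha ih =>
    intro hu hv hf
    rw [mg, if_neg ha]
    have hfa : List.filter (fun a => decide (a ∈ I2)) (a :: u) =
        List.filter (fun a => decide (a ∈ I2)) u := by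
      simp [List.filter_cons, ha]
    rw [hfa] at hf
    rw [List.filter_cons]
    simp only [hu a (List.mem_cons_self), decide_eq_true_eq, if_pos]
    exact congrArg (a :: ·) (ih (fun x hx => hu x (List.mem_cons_of_mem _ hx)) hv hf)

lemma mg_filter_right {I1 I2 : Finset (Fin q)} : ∀ {u v : List (Fin q)},
    (∀ a ∈ u, a ∈ I1) → (∀ b ∈ v, b ∈ I2) →
    (u.filter (fun a => a ∈ I2) = v.filter (fun a => a ∈ I1)) →
    (mg I1 I2 u v).filter (fun a => a ∈ I2) = v := by
  intro u v
  induction u, v using mg.induct I1 I2 with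
  | case1 v =>
    intro _ hv _
    rw [mg]
    exact List.filter_eq_self.2 (fun b hb => by simpa using hv b hb)
  | case2 a u =>
    intro hu _ hf
    rw [mg]
    simpa using hf
  | case3 a u b v ha hb ih =>
    intro hu hv hf
    rw [mg, if_pos ha, if_pos hb]
    simp only [List.filter_cons, ha, hb, decide_eq_true_eq, if_true, if_pos] at hf ⊢
    injection hf with h1 h2
    rw [h1]
    exact congrArg (b :: ·) (ih (fun x hx => hu x (List.mem_cons_of_mem _ hx))
      (fun x hx => hv x (List.mem_cons_of_mem _ hx)) h2)
  | case4 a u b v ha hb ih =>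
    intro hu hv hf
    rw [mg, if_pos ha, if_neg hb]
    have hfb : List.filter (fun a => decide (a ∈ I1)) (b :: v) =
        List.filter (fun a => decide (a ∈ I1)) v := by
      simp [List.filter_cons, hb]
    rw [hfb] at hf
    rw [List.filter_cons]
    simp only [hv b (List.mem_cons_self), decide_eq_true_eq, if_pos]
    exact congrArg (b :: ·) (ih hu (fun x hx => hv x (List.mem_cons_of_mem _ hx)) hf)
  | case5 a u b v ha ih =>
    intro hu hv hf
    rw [mg, if_neg ha]
    have hfa : List.filter (fun a => decide (a ∈ I2)) (a :: u) =
        List.filter (fun a => decide (a ∈ I2)) u := by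
      simp [List.filter_cons, ha]
    rw [hfa] at hf
    rw [List.filter_cons]
    simp only [ha, decide_eq_true_eq, if_neg]
    exact ih (fun x hx => hu x (List.mem_cons_of_mem _ hx)) hv hf

lemma ncard_prod' {α β : Type*} (s : Set α) (t : Set β) :
    (s ×ˢ t).ncard = s.ncard * t.ncard := by
  rw [← Nat.card_coe_set_eq, ← Nat.card_coe_set_eq, ← Nat.card_coe_set_eq,
    Nat.card_congr (Equiv.Set.prod s t), Nat.card_prod]

lemma cons_uncurry_inj : Function.Injective (fun p : Fin q × List (Fin q) => p.1 :: p.2) := by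
  rintro ⟨a, u⟩ ⟨b, v⟩ h
  simp only [List.cons.injEq] at h
  exact Prod.ext h.1 h.2

/-- Words over `I1` with `i` letters outside `I2` whose `I2`-filter is `w`. -/
def AAset (I1 I2 : Finset (Fin q)) (w : List (Fin q)) (i : ℕ) : Set (List (Fin q)) :=
  {u | (∀ a ∈ u, a ∈ I1) ∧ u.countP (fun a => a ∈ I1 \ I2) = i ∧
    u.filter (fun a => a ∈ I2) = w}

lemma decide_sdiff_true {I1 I2 : Finset (Fin q)} {a : Fin q} (h1 : a ∈ I1) (h2 : a ∉ I2) :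
    decide (a ∈ I1 \ I2) = true := by simp [Finset.mem_sdiff, h1, h2]

lemma decide_sdiff_false {I1 I2 : Finset (Fin q)} {a : Fin q} (h2 : a ∈ I2) :
    decide (a ∈ I1 \ I2) = false := by simp [Finset.mem_sdiff, h2]

lemma AAset_length {I1 I2 : Finset (Fin q)} {w : List (Fin q)} {i : ℕ} {u : List (Fin q)}
    (hu : u ∈ AAset I1 I2 w i) : u.length = w.length + i := by
  obtain ⟨h1, h2, h3⟩ := hu
  have hlen := List.length_eq_countP_add_countP (fun a => a ∈ I2) (l := u)
  rw [List.countP_eq_length_filter (p := fun a => decide (a ∈ I2)), h3] at hlen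
  rw [hlen]
  congr 1
  rw [← h2]
  apply List.countP_congr
  intro a ha
  have := h1 a ha
  simp [Finset.mem_sdiff, this]

lemma AAset_finite (I1 I2 : Finset (Fin q)) (w : List (Fin q)) (i : ℕ) :
    (AAset I1 I2 w i).Finite :=
  (List.finite_length_eq (Fin q) (w.length + i)).subset fun _ hu => AAset_length hu

lemma AAset_zero {I1 I2 : Finset (Fin q)} {w : List (Fin q)}
    (hw : ∀ a ∈ w, a ∈ I1 ∩ I2) : AAset I1 I2 w 0 = {w} := by
  ext u
  simp only [AAset, Set.mem_setOf_eq, Set.mem_singleton_iff]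
  constructor
  · rintro ⟨h1, h2, h3⟩
    rw [← h3]
    symm
    apply List.filter_eq_self.2
    intro a ha
    have h4 := List.countP_eq_zero.1 h2 a ha
    have h5 := h1 a ha
    simp only [Finset.mem_sdiff, h5, true_and, decide_eq_true_eq] at h4
    simpa using not_not.1 h4
  · rintro rfl
    refine ⟨fun a ha => (Finset.mem_inter.1 (hw a ha)).1, ?_, ?_⟩
    · apply List.countP_eq_zero.2
      intro a ha
      have := (Finset.mem_inter.1 (hw a ha)).2
      simp [Finset.mem_sdiff, this]
    · exact List.filter_eq_self.2 fun a ha => by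
        simpa using (Finset.mem_inter.1 (hw a ha)).2

lemma AAset_nil_succ (I1 I2 : Finset (Fin q)) (i : ℕ) :
    AAset I1 I2 [] (i + 1) =
      (fun p : Fin q × List (Fin q) => p.1 :: p.2) ''
        ((↑(I1 \ I2) : Set (Fin q)) ×ˢ AAset I1 I2 [] i) := by
  ext u
  simp only [AAset, Set.mem_setOf_eq, Set.mem_image, Set.mem_prod, Finset.coe_sort_coe,
    Finset.mem_coe, Prod.exists]
  constructor
  · rintro ⟨h1, h2, h3⟩
    match u with
    | [] => simp at h2
    | a :: u' =>
      have ha1 : a ∈ I1 := h1 a (List.mem_cons_self)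
      have ha2 : a ∉ I2 := by
        intro hmem
        rw [List.filter_cons] at h3
        simp [hmem] at h3
      refine ⟨a, u', ⟨Finset.mem_sdiff.2 ⟨ha1, ha2⟩, ?_, ?_, ?_⟩, rfl⟩
      · exact fun x hx => h1 x (List.mem_cons_of_mem _ hx)
      · rw [List.countP_cons, decide_sdiff_true ha1 ha2, if_pos rfl] at h2
        omega
      · rw [List.filter_cons] at h3
        simpa [ha2] using h3
  · rintro ⟨a, u', ⟨hmem, h1, h2, h3⟩, rfl⟩
    obtain ⟨ha1, ha2⟩ := Finset.mem_sdiff.1 hmem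
    refine ⟨?_, ?_, ?_⟩
    · intro x hx
      rcases List.mem_cons.1 hx with rfl | hx
      · exact ha1
      · exact h1 x hx
    · rw [List.countP_cons, decide_sdiff_true ha1 ha2, if_pos rfl, h2]
    · rw [List.filter_cons]
      simpa [ha2] using h3

lemma AAset_cons_succ {I1 I2 : Finset (Fin q)} {b : Fin q} (hb : b ∈ I1 ∩ I2)
    (w : List (Fin q)) (i : ℕ) :
    AAset I1 I2 (b :: w) (i + 1) =
      (fun p : Fin q × List (Fin q) => p.1 :: p.2) ''
        ((↑(I1 \ I2) : Set (Fin q)) ×ˢ AAset I1 I2 (b :: w) i) ∪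
      (fun u => b :: u) '' AAset I1 I2 w (i + 1) := by
  obtain ⟨hb1, hb2⟩ := Finset.mem_inter.1 hb
  ext u
  simp only [AAset, Set.mem_setOf_eq, Set.mem_union, Set.mem_image, Set.mem_prod,
    Finset.mem_coe, Prod.exists]
  constructor
  · rintro ⟨h1, h2, h3⟩
    match u with
    | [] => simp at h3
    | a :: u' =>
      have ha1 : a ∈ I1 := h1 a (List.mem_cons_self)
      have h1' : ∀ x ∈ u', x ∈ I1 := fun x hx => h1 x (List.mem_cons_of_mem _ hx)
      by_cases ha2 : a ∈ I2
      · right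
        rw [List.filter_cons] at h3
        simp only [ha2, decide_eq_true_eq, if_pos] at h3
        injection h3 with hab h3'
        subst hab
        rw [List.countP_cons, decide_sdiff_false ha2] at h2
        simp only [Bool.false_eq_true, if_false, add_zero] at h2
        exact ⟨u', ⟨h1', h2, h3'⟩, rfl⟩
      · left
        rw [List.filter_cons] at h3
        simp only [ha2, decide_eq_true_eq, if_neg, not_false_iff] at h3
        rw [List.countP_cons, decide_sdiff_true ha1 ha2, if_pos rfl] at h2
        exact ⟨a, u', ⟨Finset.mem_sdiff.2 ⟨ha1, ha2⟩, h1', by omega, h3⟩, rfl⟩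
  · rintro (⟨a, u', ⟨hmem, h1, h2, h3⟩, rfl⟩ | ⟨u', ⟨h1, h2, h3⟩, rfl⟩)
    · obtain ⟨ha1, ha2⟩ := Finset.mem_sdiff.1 hmem
      refine ⟨?_, ?_, ?_⟩
      · intro x hx
        rcases List.mem_cons.1 hx with rfl | hx
        · exact ha1
        · exact h1 x hx
      · rw [List.countP_cons, decide_sdiff_true ha1 ha2, if_pos rfl, h2]
      · rw [List.filter_cons]
        simpa [ha2] using h3
    · refine ⟨?_, ?_, ?_⟩
      · intro x hx
        rcases List.mem_cons.1 hx with rfl | hx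
        · exact hb1
        · exact h1 x hx
      · rw [List.countP_cons, decide_sdiff_false hb2]
        simpa using h2
      · rw [List.filter_cons]
        simpa [hb2] using h3

lemma AAset_ncard (I1 I2 : Finset (Fin q)) :
    ∀ (w : List (Fin q)), (∀ a ∈ w, a ∈ I1 ∩ I2) → ∀ i : ℕ,
      (AAset I1 I2 w i).ncard = (I1 \ I2).card ^ i * Nat.choose (w.length + i) i := by
  intro w
  induction w with
  | nil =>
    intro _ i
    induction i with
    | zero =>
      rw [AAset_zero (I1 := I1) (I2 := I2) (w := []) (fun a ha => by simp at ha)]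
      simp
    | succ i ih =>
      rw [AAset_nil_succ, Set.ncard_image_of_injective _ cons_uncurry_inj, ncard_prod',
        Set.ncard_coe_finset, ih]
      simp [pow_succ]
      ring
  | cons b w' ihw =>
    intro hw i
    have hb : b ∈ I1 ∩ I2 := hw b (List.mem_cons_self)
    have hw' : ∀ a ∈ w', a ∈ I1 ∩ I2 := fun a ha => hw a (List.mem_cons_of_mem _ ha)
    induction i with
    | zero =>
      rw [AAset_zero hw]
      simp
    | succ i ih =>
      rw [AAset_cons_succ hb w' i]
      have hdisj : Disjoint
          ((fun p : Fin q × List (Fin q) => p.1 :: p.2) ''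
            ((↑(I1 \ I2) : Set (Fin q)) ×ˢ AAset I1 I2 (b :: w') i))
          ((fun u => b :: u) '' AAset I1 I2 w' (i + 1)) := by
        rw [Set.disjoint_left]
        rintro x ⟨⟨a, u'⟩, ⟨hmem, _⟩, rfl⟩ ⟨u'', _, h⟩
        simp only [List.cons.injEq] at h
        obtain ⟨ha1, ha2⟩ := Finset.mem_sdiff.1 hmem
        exact ha2 (h.1 ▸ (Finset.mem_inter.1 hb).2)
      have hfin1 : ((fun p : Fin q × List (Fin q) => p.1 :: p.2) ''
            ((↑(I1 \ I2) : Set (Fin q)) ×ˢ AAset I1 I2 (b :: w') i)).Finite :=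
        (((I1 \ I2).finite_toSet).prod (AAset_finite I1 I2 (b :: w') i)).image _
      have hfin2 : ((fun u => b :: u) '' AAset I1 I2 w' (i + 1)).Finite :=
        (AAset_finite I1 I2 w' (i + 1)).image _
      rw [Set.ncard_union_eq hdisj hfin1 hfin2,
        Set.ncard_image_of_injective _ cons_uncurry_inj, ncard_prod',
        Set.ncard_coe_finset,
        Set.ncard_image_of_injective _ (fun x y h => by simpa using h : Function.Injective (fun u : List (Fin q) => b :: u)),
        ih, ihw hw' (i + 1)]
      have hpascal : ((b :: w').length + (i + 1)).choose (i + 1)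
          = ((b :: w').length + i).choose i + (w'.length + (i + 1)).choose (i + 1) := by
        have : (b :: w').length + (i + 1) = ((b :: w').length + i) + 1 := by omega
      -- (m+1).choose (i+1) = m.choose i + m.choose (i+1), m = (b::w').length + i = w'.length + 1 + i
        rw [this, Nat.choose_succ_succ']
        congr 2
        · simp; omega
      rw [hpascal]
      ring

/-- Words of length `j` over alphabet `K`. -/
def WordSet (K : Finset (Fin q)) (j : ℕ) : Set (List (Fin q)) :=
  {w | w.length = j ∧ ∀ a ∈ w, a ∈ K}

lemma WordSet_finite (K : Finset (Fin q)) (j : ℕ) : (WordSet K j).Finite :=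
  (List.finite_length_eq (Fin q) j).subset fun _ hw => hw.1

lemma WordSet_ncard (K : Finset (Fin q)) : ∀ j : ℕ, (WordSet K j).ncard = K.card ^ j := by
  intro j
  induction j with
  | zero =>
    have : WordSet K 0 = {([] : List (Fin q))} := by
      ext w
      simp only [WordSet, Set.mem_setOf_eq, Set.mem_singleton_iff, List.length_eq_zero_iff]
      constructor
      · rintro ⟨rfl, _⟩; rfl
      · rintro rfl; simp
    rw [this]
    simp
  | succ j ih =>
    have : WordSet K (j + 1) =
        (fun p : Fin q × List (Fin q) => p.1 :: p.2) ''
          ((↑K : Set (Fin q)) ×ˢ WordSet K j) := by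
      ext w
      simp only [WordSet, Set.mem_setOf_eq, Set.mem_image, Set.mem_prod, Finset.mem_coe,
        Prod.exists]
      constructor
      · rintro ⟨hlen, hmem⟩
        match w with
        | [] => simp at hlen
        | a :: w' =>
          refine ⟨a, w', ⟨hmem a (List.mem_cons_self), by simpa using hlen,
            fun x hx => hmem x (List.mem_cons_of_mem _ hx)⟩, rfl⟩
      · rintro ⟨a, w', ⟨ha, hlen, hmem⟩, rfl⟩
        refine ⟨by simpa using hlen, fun x hx => ?_⟩
        rcases List.mem_cons.1 hx with rfl | hx
        · exact ha
        · exact hmem x hx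
    rw [this, Set.ncard_image_of_injective _ cons_uncurry_inj, ncard_prod',
      Set.ncard_coe_finset, ih, pow_succ]
    ring

lemma ncard_biUnion {ι α : Type*} (W : Finset ι) (F : ι → Set α)
    (hfin : ∀ w ∈ W, (F w).Finite)
    (hdisj : ∀ w ∈ W, ∀ w' ∈ W, w ≠ w' → Disjoint (F w) (F w')) :
    (⋃ w ∈ W, F w).ncard = ∑ w ∈ W, (F w).ncard := by
  classical
  induction W using Finset.induction_on with
  | empty => simp
  | insert a s hnotmem ih =>
    rw [Finset.sum_insert hnotmem]
    have hset : (⋃ w ∈ insert a s, F w) = F a ∪ ⋃ w ∈ s, F w := by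
      simp [Set.biUnion_insert]
    rw [hset]
    have hfin2 : (⋃ w ∈ s, F w).Finite :=
      Set.Finite.biUnion s.finite_toSet fun w hw => hfin w (Finset.mem_insert_of_mem hw)
    have hd : Disjoint (F a) (⋃ w ∈ s, F w) := by
      rw [Set.disjoint_right]
      intro x hx hxa
      simp only [Set.mem_iUnion] at hx
      obtain ⟨w, hw, hxw⟩ := hx
      have hne : a ≠ w := fun h => hnotmem (h ▸ hw)
      exact Set.disjoint_left.1
        (hdisj a (Finset.mem_insert_self a s) w (Finset.mem_insert_of_mem hw) hne) hxa hxw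
    rw [Set.ncard_union_eq hd (hfin a (Finset.mem_insert_self a s)) hfin2,
      ih (fun w hw => hfin w (Finset.mem_insert_of_mem hw))
        (fun w hw w' hw' => hdisj w (Finset.mem_insert_of_mem hw) w' (Finset.mem_insert_of_mem hw'))]

lemma countP_restrict {p P : Fin q → Prop} [DecidablePred p] [DecidablePred P]
    (hp : ∀ a, p a → P a) (l : List (Fin q)) :
    l.countP (fun a => p a) = (l.filter (fun a => P a)).countP (fun a => p a) := by
  rw [List.countP_filter]
  apply List.countP_congr
  intro a _
  by_cases h : p a <;> simp [h, hp a]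

lemma countP_inter_filter (I1 I2 : Finset (Fin q)) (l : List (Fin q)) :
    l.countP (fun a => a ∈ I1 ∩ I2) =
      (l.filter (fun a => a ∈ I1)).countP (fun a => a ∈ I2) := by
  rw [List.countP_filter]
  apply List.countP_congr
  intro a _
  by_cases h1 : a ∈ I1 <;> by_cases h2 : a ∈ I2 <;> simp [Finset.mem_inter, h1, h2]

lemma length_fourway (I1 I2 : Finset (Fin q)) (l : List (Fin q)) :
    l.length = l.countP (fun a => a ∈ I1 ∩ I2) + l.countP (fun a => a ∈ I1 \ I2) +
      l.countP (fun a => a ∈ I2 \ I1) +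
      l.countP (fun a => a ∈ Finset.univ \ (I1 ∪ I2)) := by
  induction l with
  | nil => simp
  | cons a l ih =>
    rw [List.length_cons, ih, List.countP_cons, List.countP_cons, List.countP_cons,
      List.countP_cons]
    by_cases h1 : a ∈ I1 <;> by_cases h2 : a ∈ I2 <;>
      simp [Finset.mem_inter, Finset.mem_sdiff, Finset.mem_union, h1, h2] <;> omega

/-- The set of pairs of channel outputs. -/
def PairSet (I1 I2 : Finset (Fin q)) (j1 i1 i2 : ℕ) : Set (List (Fin q) × List (Fin q)) :=
  ⋃ w ∈ (WordSet_finite (I1 ∩ I2) j1).toFinset, (AAset I1 I2 w i1) ×ˢ (AAset I2 I1 w i2)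

lemma PairSet_ncard (I1 I2 : Finset (Fin q)) (j1 i1 i2 : ℕ) :
    (PairSet I1 I2 j1 i1 i2).ncard =
      (I1 ∩ I2).card ^ j1 * ((I1 \ I2).card ^ i1 * Nat.choose (j1 + i1) i1) *
        ((I2 \ I1).card ^ i2 * Nat.choose (j1 + i2) i2) := by
  rw [PairSet, ncard_biUnion]
  · have hconst : ∀ w ∈ (WordSet_finite (I1 ∩ I2) j1).toFinset,
        ((AAset I1 I2 w i1) ×ˢ (AAset I2 I1 w i2)).ncard =
          ((I1 \ I2).card ^ i1 * Nat.choose (j1 + i1) i1) *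
            ((I2 \ I1).card ^ i2 * Nat.choose (j1 + i2) i2) := by
      intro w hw
      rw [Set.Finite.mem_toFinset] at hw
      obtain ⟨hlen, hmem⟩ := hw
      rw [ncard_prod', AAset_ncard I1 I2 w hmem i1,
        AAset_ncard I2 I1 w (fun a ha => by
          have := hmem a ha
          rwa [Finset.inter_comm] at this) i2, hlen]
    rw [Finset.sum_congr rfl hconst, Finset.sum_const, smul_eq_mul]
    have hcard : (WordSet_finite (I1 ∩ I2) j1).toFinset.card = (I1 ∩ I2).card ^ j1 := by
      rw [← WordSet_ncard (I1 ∩ I2) j1, Set.ncard_eq_toFinset_card _ (WordSet_finite (I1 ∩ I2) j1)]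
    rw [hcard]
    ring
  · intro w _
    exact ((AAset_finite I1 I2 w i1).prod (AAset_finite I2 I1 w i2))
  · intro w hw w' hw' hne
    rw [Set.disjoint_left]
    rintro ⟨u, v⟩ hu hv
    apply hne
    have h1 := (hu.1 : u ∈ AAset I1 I2 w i1).2.2
    have h2 := (hv.1 : u ∈ AAset I1 I2 w' i1).2.2
    rw [← h1, ← h2]


end Aux

/-- the exact count of output tuples of two intersecting coloring
channels over inputs with a prescribed composition. -/
theorem two_sets_count (q k p1 p2 n : ℕ) (hq : 2 ≤ q)
    (hk : 1 ≤ k) (hp1 : 1 ≤ p1) (hp2 : 1 ≤ p2)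
    (I1 I2 : Finset (Fin q))
    (hK : (I1 ∩ I2).card = k) (hP1 : (I1 \ I2).card = p1) (hP2 : (I2 \ I1).card = p2)
    (i1 i2 j1 j2 : ℕ)
    (hsum : j1 + j2 + i1 + i2 = n)
    (hL : j2 = 0 ∨ (Finset.univ \ (I1 ∪ I2) : Finset (Fin q)).Nonempty) :
    Set.ncard { y : Fin 2 → List (Fin q) | ∃ x : List (Fin q), x.length = n ∧
        x.countP (fun a => a ∈ I1 \ I2) = i1 ∧
        x.countP (fun a => a ∈ I2 \ I1) = i2 ∧
        x.countP (fun a => a ∈ I1 ∩ I2) = j1 ∧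
        x.countP (fun a => a ∈ Finset.univ \ (I1 ∪ I2)) = j2 ∧
        y = fun ℓ => channelOutput (![I1, I2] ℓ) x }
      = k ^ j1 * p1 ^ i1 * p2 ^ i2 *
          Nat.choose (j1 + i1) i1 * Nat.choose (j1 + i2) i2 := by
  obtain ⟨c, hc⟩ : ∃ c : Fin q, j2 = 0 ∨ c ∈ Finset.univ \ (I1 ∪ I2) := by
    rcases hL with h | ⟨c, hc⟩
    · exact ⟨⟨0, by omega⟩, Or.inl h⟩
    · exact ⟨c, Or.inr hc⟩
  have hset : { y : Fin 2 → List (Fin q) | ∃ x : List (Fin q), x.length = n ∧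
        x.countP (fun a => a ∈ I1 \ I2) = i1 ∧
        x.countP (fun a => a ∈ I2 \ I1) = i2 ∧
        x.countP (fun a => a ∈ I1 ∩ I2) = j1 ∧
        x.countP (fun a => a ∈ Finset.univ \ (I1 ∪ I2)) = j2 ∧
        y = fun ℓ => channelOutput (![I1, I2] ℓ) x }
      = (fun p : List (Fin q) × List (Fin q) => ![p.1, p.2]) '' PairSet I1 I2 j1 i1 i2 := by
    ext y
    simp only [Set.mem_setOf_eq, Set.mem_image, Prod.exists]
    constructor
    · rintro ⟨x, hlen, hc1, hc2, hc3, hc4, rfl⟩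
      refine ⟨x.filter (fun a => a ∈ I1), x.filter (fun a => a ∈ I2), ?_, ?_⟩
      · rw [PairSet]
        simp only [Set.mem_iUnion, Set.Finite.mem_toFinset, Set.mem_prod]
        refine ⟨(x.filter (fun a => a ∈ I1)).filter (fun a => a ∈ I2), ⟨?_, ?_⟩, ?_, ?_⟩
        · -- length = j1
          rw [← List.countP_eq_length_filter, ← countP_inter_filter, hc3]
        · -- letters in K
          intro a ha
          rw [List.mem_filter] at ha
          obtain ⟨ha1, ha2⟩ := ha
          rw [List.mem_filter] at ha1
          exact Finset.mem_inter.2 ⟨by simpa using ha1.2, by simpa using ha2⟩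
        · -- u ∈ AAset I1 I2 w i1
          refine ⟨fun a ha => by simpa using (List.mem_filter.1 ha).2, ?_, rfl⟩
          rw [← countP_restrict (p := fun a => a ∈ I1 \ I2) (P := fun a => a ∈ I1)
            (fun a ha => (Finset.mem_sdiff.1 ha).1), hc1]
        · -- v ∈ AAset I2 I1 w i2
          refine ⟨fun a ha => by simpa using (List.mem_filter.1 ha).2, ?_, ?_⟩
          · rw [← countP_restrict (p := fun a => a ∈ I2 \ I1) (P := fun a => a ∈ I2)
              (fun a ha => (Finset.mem_sdiff.1 ha).1), hc2]
          · rw [List.filter_filter, List.filter_filter]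
            apply List.filter_congr
            intro a _
            exact Bool.and_comm _ _
      · funext ℓ
        fin_cases ℓ <;> simp [channelOutput] <;> rfl
    · rintro ⟨u, v, hp, rfl⟩
      rw [PairSet] at hp
      simp only [Set.mem_iUnion, Set.Finite.mem_toFinset, Set.mem_prod] at hp
      obtain ⟨w, ⟨hwlen, hwmem⟩, ⟨hu1, hu2, hu3⟩, hv1, hv2, hv3⟩ := hp
      have hf : u.filter (fun a => a ∈ I2) = v.filter (fun a => a ∈ I1) := by
        rw [hu3, hv3]
      have hrep1 : (List.replicate j2 c).filter (fun a => a ∈ I1) = [] := by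
        rcases hc with rfl | hc
        · simp
        · have : c ∉ I1 := fun h => by
            simp [Finset.mem_sdiff, Finset.mem_union, h] at hc
          simp [List.filter_replicate, this]
      have hrep2 : (List.replicate j2 c).filter (fun a => a ∈ I2) = [] := by
        rcases hc with rfl | hc
        · simp
        · have : c ∉ I2 := fun h => by
            simp [Finset.mem_sdiff, Finset.mem_union, h] at hc
          simp [List.filter_replicate, this]
      set x : List (Fin q) := mg I1 I2 u v ++ List.replicate j2 c with hxdef
      have hfl : x.filter (fun a => a ∈ I1) = u := by
        rw [hxdef, List.filter_append, hrep1, List.append_nil, mg_filter_left hu1 hv1 hf]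
      have hfr : x.filter (fun a => a ∈ I2) = v := by
        rw [hxdef, List.filter_append, hrep2, List.append_nil, mg_filter_right hu1 hv1 hf]
      have hx1 : x.countP (fun a => a ∈ I1 \ I2) = i1 := by
        rw [countP_restrict (p := fun a => a ∈ I1 \ I2) (P := fun a => a ∈ I1)
          (fun a ha => (Finset.mem_sdiff.1 ha).1), hfl, hu2]
      have hx2 : x.countP (fun a => a ∈ I2 \ I1) = i2 := by
        rw [countP_restrict (p := fun a => a ∈ I2 \ I1) (P := fun a => a ∈ I2)
          (fun a ha => (Finset.mem_sdiff.1 ha).1), hfr, hv2]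
      have hx3 : x.countP (fun a => a ∈ I1 ∩ I2) = j1 := by
        rw [countP_inter_filter, hfl, List.countP_eq_length_filter, hu3, hwlen]
      have hx4 : x.countP (fun a => a ∈ Finset.univ \ (I1 ∪ I2)) = j2 := by
        rw [hxdef, List.countP_append]
        have h1 : (mg I1 I2 u v).countP (fun a => a ∈ Finset.univ \ (I1 ∪ I2)) = 0 := by
          apply List.countP_eq_zero.2
          intro a ha
          rcases mg_mem ha with h | h
          · simp [Finset.mem_sdiff, Finset.mem_union, hu1 a h]
          · simp [Finset.mem_sdiff, Finset.mem_union, hv1 a h]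
        have h2 : (List.replicate j2 c).countP
            (fun a => a ∈ Finset.univ \ (I1 ∪ I2)) = j2 := by
          rcases hc with rfl | hc
          · simp
          · rw [List.countP_replicate]
            simp [hc]
        rw [h1, h2, zero_add]
      refine ⟨x, ?_, hx1, hx2, hx3, hx4, ?_⟩
      · rw [length_fourway I1 I2 x, hx1, hx2, hx3, hx4]
        omega
      · funext ℓ
        fin_cases ℓ <;> simp [channelOutput, hfl, hfr] <;> first | exact hfl.symm | exact hfr.symm
  rw [hset, Set.ncard_image_of_injective _ ?hinj, PairSet_ncard, hK, hP1, hP2]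
  · ring
  case hinj =>
    rintro ⟨u, v⟩ ⟨u', v'⟩ h
    have h0 := congrFun h 0
    have h1 := congrFun h 1
    simp only [Matrix.cons_val_zero, Matrix.cons_val_one, Matrix.head_cons] at h0 h1
    exact Prod.ext h0 h1
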